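/- For a < b real and positive constants c_a, c_b, the function u = 2 ∂²_x log(c_a e^{ax + a²y + a³t} + c_b e^{bx + b²y + b³t}) satisfies the KP equation ∂_x(−4 u_t + 6 u u_x + u_{xxx}) + 3 u_{yy} = 0. -/

import Mathlib

/-- `τ = c_a e^{ax + a²y + a³t} + c_b e^{bx + b²y + b³t}`. -/
noncomputable def tau2 (a b ca cb x y t : ℝ) : ℝ :=
  ca * Real.exp (a * x + a ^ 2 * y + a ^ 3 * t) +
  cb * Real.exp (b * x + b ^ 2 * y + b ^ 3 * t)

/-- `u = 2 ∂²_x log τ`. -/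
noncomputable def uKP (a b ca cb x y t : ℝ) : ℝ :=
  2 * iteratedDeriv 2 (fun s => Real.log (tau2 a b ca cb s y t)) x

noncomputable def uKP_x (a b ca cb x y t : ℝ) : ℝ :=
  deriv (fun s => uKP a b ca cb s y t) x

noncomputable def uKP_t (a b ca cb x y t : ℝ) : ℝ :=
  deriv (fun s => uKP a b ca cb x y s) t

noncomputable def uKP_xxx (a b ca cb x y t : ℝ) : ℝ :=
  iteratedDeriv 3 (fun s => uKP a b ca cb s y t) x

noncomputable def uKP_yy (a b ca cb x y t : ℝ) : ℝ :=
  iteratedDeriv 2 (fun s => uKP a b ca cb x s t) y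

/-! ### Auxiliary machinery -/

/-- A single exponential `C e^{cx + c²y + c³t}`. -/
noncomputable def Ef (c C x y t : ℝ) : ℝ := C * Real.exp (c * x + c ^ 2 * y + c ^ 3 * t)

lemma Ef_pos {C : ℝ} (hC : 0 < C) (c x y t : ℝ) : 0 < Ef c C x y t :=
  mul_pos hC (Real.exp_pos _)

lemma hasDerivAt_Ef_x (c C y t x : ℝ) :
    HasDerivAt (fun s => Ef c C s y t) (c * Ef c C x y t) x := by
  have h : HasDerivAt (fun s : ℝ => c * s + c ^ 2 * y + c ^ 3 * t) (c * 1) x :=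
    (((hasDerivAt_id x).const_mul c).add_const _).add_const _
  have h2 := (h.exp).const_mul C
  unfold Ef
  convert h2 using 1 <;> try rfl
  ring

lemma hasDerivAt_Ef_y (c C x t y : ℝ) :
    HasDerivAt (fun s => Ef c C x s t) (c ^ 2 * Ef c C x y t) y := by
  have h : HasDerivAt (fun s : ℝ => c * x + c ^ 2 * s + c ^ 3 * t) (c ^ 2 * 1) y :=
    ((((hasDerivAt_id y).const_mul (c ^ 2)).const_add (c * x)).add_const _)
  have h2 := (h.exp).const_mul C
  unfold Ef
  convert h2 using 1 <;> try rfl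
  ring

lemma hasDerivAt_Ef_t (c C x y t : ℝ) :
    HasDerivAt (fun s => Ef c C x y s) (c ^ 3 * Ef c C x y t) t := by
  have h : HasDerivAt (fun s : ℝ => c * x + c ^ 2 * y + c ^ 3 * s) (c ^ 3 * 1) t :=
    ((hasDerivAt_id t).const_mul (c ^ 3)).const_add (c * x + c ^ 2 * y)
  have h2 := (h.exp).const_mul C
  unfold Ef
  convert h2 using 1 <;> try rfl
  ring

section
variable {P Q : ℝ → ℝ} {ρ σ x : ℝ}

lemma dLog (hP : HasDerivAt P (ρ * P x) x) (hQ : HasDerivAt Q (σ * Q x) x)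
    (hD : 0 < P x + Q x) :
    HasDerivAt (fun s => Real.log (P s + Q s)) ((ρ * P x + σ * Q x) / (P x + Q x)) x :=
  (hP.add hQ).log hD.ne'

lemma d2 (hP : HasDerivAt P (ρ * P x) x) (hQ : HasDerivAt Q (σ * Q x) x)
    (hD : 0 < P x + Q x) :
    HasDerivAt (fun s => (ρ * P s + σ * Q s) / (P s + Q s))
      ((σ - ρ) ^ 2 * (P x * Q x) / (P x + Q x) ^ 2) x := by
  have h := ((hP.const_mul ρ).add (hQ.const_mul σ)).div (hP.add hQ) hD.ne'
  convert h using 1 <;> try rfl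
  simp only [Pi.add_apply, Pi.mul_apply, Pi.sub_apply, Pi.pow_apply, Nat.cast_ofNat]
  field_simp
  ring

lemma d3 (c : ℝ) (hP : HasDerivAt P (ρ * P x) x) (hQ : HasDerivAt Q (σ * Q x) x)
    (hD : 0 < P x + Q x) :
    HasDerivAt (fun s => c * (P s * Q s) / (P s + Q s) ^ 2)
      (c * (σ - ρ) * (P x * Q x * (P x - Q x)) / (P x + Q x) ^ 3) x := by
  have h := ((hP.mul hQ).const_mul c).div ((hP.add hQ).pow 2) (pow_ne_zero 2 hD.ne')
  convert h using 1 <;> try rfl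
  simp only [Pi.add_apply, Pi.mul_apply, Pi.sub_apply, Pi.pow_apply, Nat.cast_ofNat]
  field_simp
  ring

lemma d4 (c : ℝ) (hP : HasDerivAt P (ρ * P x) x) (hQ : HasDerivAt Q (σ * Q x) x)
    (hD : 0 < P x + Q x) :
    HasDerivAt (fun s => c * (P s * Q s * (P s - Q s)) / (P s + Q s) ^ 3)
      (c * (σ - ρ) * (P x * Q x * (P x ^ 2 - 4 * (P x * Q x) + Q x ^ 2)) / (P x + Q x) ^ 4) x := by
  have h := (((hP.mul hQ).mul (hP.sub hQ)).const_mul c).div ((hP.add hQ).pow 3)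
    (pow_ne_zero 3 hD.ne')
  convert h using 1 <;> try rfl
  simp only [Pi.add_apply, Pi.mul_apply, Pi.sub_apply, Pi.pow_apply, Nat.cast_ofNat]
  field_simp
  ring

lemma d5 (c : ℝ) (hP : HasDerivAt P (ρ * P x) x) (hQ : HasDerivAt Q (σ * Q x) x)
    (hD : 0 < P x + Q x) :
    HasDerivAt (fun s => c * (P s * Q s * (P s ^ 2 - 4 * (P s * Q s) + Q s ^ 2)) / (P s + Q s) ^ 4)
      (c * (σ - ρ) * (P x * Q x * (P x - Q x) * (P x ^ 2 - 10 * (P x * Q x) + Q x ^ 2)) /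
        (P x + Q x) ^ 5) x := by
  have h := (((hP.mul hQ).mul (((hP.pow 2).sub ((hP.mul hQ).const_mul 4)).add
    (hQ.pow 2))).const_mul c).div ((hP.add hQ).pow 4) (pow_ne_zero 4 hD.ne')
  convert h using 1 <;> try rfl
  simp only [Pi.add_apply, Pi.mul_apply, Pi.sub_apply, Pi.pow_apply, Nat.cast_ofNat]
  field_simp
  ring

lemma d6 (c : ℝ) (hP : HasDerivAt P (ρ * P x) x) (hQ : HasDerivAt Q (σ * Q x) x)
    (hD : 0 < P x + Q x) :
    HasDerivAt
      (fun s => c * (P s * Q s * (P s - Q s) * (P s ^ 2 - 10 * (P s * Q s) + Q s ^ 2)) /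
        (P s + Q s) ^ 5)
      (c * (σ - ρ) * (P x * Q x * (P x ^ 4 - 26 * (P x ^ 3 * Q x) + 66 * (P x ^ 2 * Q x ^ 2)
        - 26 * (P x * Q x ^ 3) + Q x ^ 4)) / (P x + Q x) ^ 6) x := by
  have h := ((((hP.mul hQ).mul (hP.sub hQ)).mul (((hP.pow 2).sub ((hP.mul hQ).const_mul 10)).add
    (hQ.pow 2))).const_mul c).div ((hP.add hQ).pow 5) (pow_ne_zero 5 hD.ne')
  convert h using 1 <;> try rfl
  simp only [Pi.add_apply, Pi.mul_apply, Pi.sub_apply, Pi.pow_apply, Nat.cast_ofNat]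
  field_simp
  ring

end

/-! ### Closed forms -/

lemma iteratedDeriv_two' (f : ℝ → ℝ) : iteratedDeriv 2 f = deriv (deriv f) := by
  rw [show (2 : ℕ) = 1 + 1 from rfl, iteratedDeriv_succ, iteratedDeriv_one]

lemma iteratedDeriv_three' (f : ℝ → ℝ) : iteratedDeriv 3 f = deriv (deriv (deriv f)) := by
  rw [show (3 : ℕ) = 1 + 1 + 1 from rfl, iteratedDeriv_succ, iteratedDeriv_succ,
    iteratedDeriv_one]

lemma uKP_closed (a b ca cb : ℝ) (hca : 0 < ca) (hcb : 0 < cb) (x y t : ℝ) :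
    uKP a b ca cb x y t =
      2 * (b - a) ^ 2 * (Ef a ca x y t * Ef b cb x y t) /
        (Ef a ca x y t + Ef b cb x y t) ^ 2 := by
  have hD : ∀ s, 0 < Ef a ca s y t + Ef b cb s y t :=
    fun s => add_pos (Ef_pos hca _ _ _ _) (Ef_pos hcb _ _ _ _)
  have h0 : (fun s => Real.log (tau2 a b ca cb s y t)) =
      fun s => Real.log (Ef a ca s y t + Ef b cb s y t) := rfl
  have h1 : deriv (fun s => Real.log (Ef a ca s y t + Ef b cb s y t)) =
      fun s => (a * Ef a ca s y t + b * Ef b cb s y t) / (Ef a ca s y t + Ef b cb s y t) :=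
    funext fun s => (dLog (hasDerivAt_Ef_x a ca y t s) (hasDerivAt_Ef_x b cb y t s) (hD s)).deriv
  unfold uKP
  rw [iteratedDeriv_two', h0, h1,
    (d2 (hasDerivAt_Ef_x a ca y t x) (hasDerivAt_Ef_x b cb y t x) (hD x)).deriv]
  ring

lemma uKP_fun_x_closed (a b ca cb : ℝ) (hca : 0 < ca) (hcb : 0 < cb) (y t : ℝ) :
    (fun s => uKP a b ca cb s y t) =
      fun s => 2 * (b - a) ^ 2 * (Ef a ca s y t * Ef b cb s y t) /
        (Ef a ca s y t + Ef b cb s y t) ^ 2 :=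
  funext fun s => uKP_closed a b ca cb hca hcb s y t

lemma uKP_x_closed (a b ca cb : ℝ) (hca : 0 < ca) (hcb : 0 < cb) (x y t : ℝ) :
    uKP_x a b ca cb x y t =
      2 * (b - a) ^ 2 * (b - a) *
        (Ef a ca x y t * Ef b cb x y t * (Ef a ca x y t - Ef b cb x y t)) /
        (Ef a ca x y t + Ef b cb x y t) ^ 3 := by
  have hD : ∀ s, 0 < Ef a ca s y t + Ef b cb s y t :=
    fun s => add_pos (Ef_pos hca _ _ _ _) (Ef_pos hcb _ _ _ _)
  unfold uKP_x
  rw [uKP_fun_x_closed a b ca cb hca hcb y t]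
  exact (d3 (2 * (b - a) ^ 2) (hasDerivAt_Ef_x a ca y t x) (hasDerivAt_Ef_x b cb y t x)
    (hD x)).deriv

lemma uKP_t_closed (a b ca cb : ℝ) (hca : 0 < ca) (hcb : 0 < cb) (x y t : ℝ) :
    uKP_t a b ca cb x y t =
      2 * (b - a) ^ 2 * (b ^ 3 - a ^ 3) *
        (Ef a ca x y t * Ef b cb x y t * (Ef a ca x y t - Ef b cb x y t)) /
        (Ef a ca x y t + Ef b cb x y t) ^ 3 := by
  have hD : 0 < Ef a ca x y t + Ef b cb x y t :=
    add_pos (Ef_pos hca _ _ _ _) (Ef_pos hcb _ _ _ _)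
  unfold uKP_t
  rw [show (fun s => uKP a b ca cb x y s) =
      fun s => 2 * (b - a) ^ 2 * (Ef a ca x y s * Ef b cb x y s) /
        (Ef a ca x y s + Ef b cb x y s) ^ 2 from
    funext fun s => uKP_closed a b ca cb hca hcb x y s]
  exact (d3 (2 * (b - a) ^ 2) (hasDerivAt_Ef_t a ca x y t) (hasDerivAt_Ef_t b cb x y t)
    hD).deriv

lemma uKP_xxx_closed (a b ca cb : ℝ) (hca : 0 < ca) (hcb : 0 < cb) (x y t : ℝ) :
    uKP_xxx a b ca cb x y t =
      2 * (b - a) ^ 2 * (b - a) * (b - a) * (b - a) *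
        (Ef a ca x y t * Ef b cb x y t * (Ef a ca x y t - Ef b cb x y t) *
          (Ef a ca x y t ^ 2 - 10 * (Ef a ca x y t * Ef b cb x y t) + Ef b cb x y t ^ 2)) /
        (Ef a ca x y t + Ef b cb x y t) ^ 5 := by
  have hD : ∀ s, 0 < Ef a ca s y t + Ef b cb s y t :=
    fun s => add_pos (Ef_pos hca _ _ _ _) (Ef_pos hcb _ _ _ _)
  have h1 : deriv (fun s => 2 * (b - a) ^ 2 * (Ef a ca s y t * Ef b cb s y t) /
      (Ef a ca s y t + Ef b cb s y t) ^ 2) =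
      fun s => 2 * (b - a) ^ 2 * (b - a) *
        (Ef a ca s y t * Ef b cb s y t * (Ef a ca s y t - Ef b cb s y t)) /
        (Ef a ca s y t + Ef b cb s y t) ^ 3 :=
    funext fun s => (d3 (2 * (b - a) ^ 2) (hasDerivAt_Ef_x a ca y t s)
      (hasDerivAt_Ef_x b cb y t s) (hD s)).deriv
  have h2 : deriv (fun s => 2 * (b - a) ^ 2 * (b - a) *
      (Ef a ca s y t * Ef b cb s y t * (Ef a ca s y t - Ef b cb s y t)) /
      (Ef a ca s y t + Ef b cb s y t) ^ 3) =
      fun s => 2 * (b - a) ^ 2 * (b - a) * (b - a) *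
        (Ef a ca s y t * Ef b cb s y t *
          (Ef a ca s y t ^ 2 - 4 * (Ef a ca s y t * Ef b cb s y t) + Ef b cb s y t ^ 2)) /
        (Ef a ca s y t + Ef b cb s y t) ^ 4 :=
    funext fun s => (d4 (2 * (b - a) ^ 2 * (b - a)) (hasDerivAt_Ef_x a ca y t s)
      (hasDerivAt_Ef_x b cb y t s) (hD s)).deriv
  unfold uKP_xxx
  rw [iteratedDeriv_three', uKP_fun_x_closed a b ca cb hca hcb y t, h1, h2]
  exact (d5 (2 * (b - a) ^ 2 * (b - a) * (b - a)) (hasDerivAt_Ef_x a ca y t x)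
    (hasDerivAt_Ef_x b cb y t x) (hD x)).deriv

lemma uKP_yy_closed (a b ca cb : ℝ) (hca : 0 < ca) (hcb : 0 < cb) (x y t : ℝ) :
    uKP_yy a b ca cb x y t =
      2 * (b - a) ^ 2 * (b ^ 2 - a ^ 2) * (b ^ 2 - a ^ 2) *
        (Ef a ca x y t * Ef b cb x y t *
          (Ef a ca x y t ^ 2 - 4 * (Ef a ca x y t * Ef b cb x y t) + Ef b cb x y t ^ 2)) /
        (Ef a ca x y t + Ef b cb x y t) ^ 4 := by
  have hD : ∀ s, 0 < Ef a ca x s t + Ef b cb x s t :=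
    fun s => add_pos (Ef_pos hca _ _ _ _) (Ef_pos hcb _ _ _ _)
  have h1 : deriv (fun s => 2 * (b - a) ^ 2 * (Ef a ca x s t * Ef b cb x s t) /
      (Ef a ca x s t + Ef b cb x s t) ^ 2) =
      fun s => 2 * (b - a) ^ 2 * (b ^ 2 - a ^ 2) *
        (Ef a ca x s t * Ef b cb x s t * (Ef a ca x s t - Ef b cb x s t)) /
        (Ef a ca x s t + Ef b cb x s t) ^ 3 :=
    funext fun s => (d3 (2 * (b - a) ^ 2) (hasDerivAt_Ef_y a ca x t s)
      (hasDerivAt_Ef_y b cb x t s) (hD s)).deriv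
  unfold uKP_yy
  rw [iteratedDeriv_two',
    show (fun s => uKP a b ca cb x s t) =
      fun s => 2 * (b - a) ^ 2 * (Ef a ca x s t * Ef b cb x s t) /
        (Ef a ca x s t + Ef b cb x s t) ^ 2 from
      funext fun s => uKP_closed a b ca cb hca hcb x s t, h1]
  exact (d4 (2 * (b - a) ^ 2 * (b ^ 2 - a ^ 2)) (hasDerivAt_Ef_y a ca x t y)
    (hasDerivAt_Ef_y b cb x t y) (hD y)).deriv

/-- For `a < b` and positive constants `c_a, c_b`, the function
`u = 2 ∂²_x log(c_a e^{ax+a²y+a³t} + c_b e^{bx+b²y+b³t})` satisfies the KP equation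
`∂_x(−4u_t + 6uu_x + u_{xxx}) + 3u_{yy} = 0`. -/
theorem one_soliton_solves_KP (a b ca cb : ℝ) (hab : a < b) (hca : 0 < ca) (hcb : 0 < cb) :
    ∀ x y t : ℝ,
      deriv (fun s =>
          -4 * uKP_t a b ca cb s y t + 6 * uKP a b ca cb s y t * uKP_x a b ca cb s y t +
            uKP_xxx a b ca cb s y t) x
        + 3 * uKP_yy a b ca cb x y t = 0 := by
  intro x y t
  have hD : ∀ s, 0 < Ef a ca s y t + Ef b cb s y t :=
    fun s => add_pos (Ef_pos hca _ _ _ _) (Ef_pos hcb _ _ _ _)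
  have hfun : (fun s =>
      -4 * uKP_t a b ca cb s y t + 6 * uKP a b ca cb s y t * uKP_x a b ca cb s y t +
        uKP_xxx a b ca cb s y t) =
      fun s =>
        -4 * (2 * (b - a) ^ 2 * (b ^ 3 - a ^ 3) *
          (Ef a ca s y t * Ef b cb s y t * (Ef a ca s y t - Ef b cb s y t)) /
          (Ef a ca s y t + Ef b cb s y t) ^ 3) +
        6 * (2 * (b - a) ^ 2 * (Ef a ca s y t * Ef b cb s y t) /
          (Ef a ca s y t + Ef b cb s y t) ^ 2) *
          (2 * (b - a) ^ 2 * (b - a) *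
            (Ef a ca s y t * Ef b cb s y t * (Ef a ca s y t - Ef b cb s y t)) /
            (Ef a ca s y t + Ef b cb s y t) ^ 3) +
        2 * (b - a) ^ 2 * (b - a) * (b - a) * (b - a) *
          (Ef a ca s y t * Ef b cb s y t * (Ef a ca s y t - Ef b cb s y t) *
            (Ef a ca s y t ^ 2 - 10 * (Ef a ca s y t * Ef b cb s y t) + Ef b cb s y t ^ 2)) /
          (Ef a ca s y t + Ef b cb s y t) ^ 5 :=
    funext fun s => by
      rw [uKP_t_closed a b ca cb hca hcb s y t, uKP_closed a b ca cb hca hcb s y t,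
        uKP_x_closed a b ca cb hca hcb s y t, uKP_xxx_closed a b ca cb hca hcb s y t]
  have dT := (d4 (2 * (b - a) ^ 2 * (b ^ 3 - a ^ 3)) (hasDerivAt_Ef_x a ca y t x)
    (hasDerivAt_Ef_x b cb y t x) (hD x)).const_mul (-4)
  have dU := (d3 (2 * (b - a) ^ 2) (hasDerivAt_Ef_x a ca y t x)
    (hasDerivAt_Ef_x b cb y t x) (hD x)).const_mul (6 : ℝ)
  have dUx := d4 (2 * (b - a) ^ 2 * (b - a)) (hasDerivAt_Ef_x a ca y t x)
    (hasDerivAt_Ef_x b cb y t x) (hD x)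
  have dX3 := d6 (2 * (b - a) ^ 2 * (b - a) * (b - a) * (b - a)) (hasDerivAt_Ef_x a ca y t x)
    (hasDerivAt_Ef_x b cb y t x) (hD x)
  have htotal := (dT.add (dU.mul dUx)).add dX3
  rw [hfun, uKP_yy_closed a b ca cb hca hcb x y t]
  erw [htotal.deriv]
  have hne : Ef a ca x y t + Ef b cb x y t ≠ 0 := (hD x).ne'
  field_simp
  ring
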